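/- Let A ∈ ℂ^{n×n}, λ₀ an eigenvalue of A, and let u₁,…,u_p and v₁,…,v_p be left and right Jordan chains for λ₀ corresponding to a Jordan block J_p(λ₀). If λ ∉ σ(A), then u_i*(A − λI)⁻¹v_j = 0 for all i, j ≥ 1 with i + j ≤ p. -/

import Mathlib

open Matrix

/-- Biorthogonality through the resolvent: `uᵢ* (A - λI)⁻¹ vⱼ = 0` for
`i + j ≤ p`, `i, j ≥ 1`. -/
theorem resolvent_biorthogonality {n p : ℕ}
    (A : Matrix (Fin n) (Fin n) ℂ) (lam0 lam : ℂ)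
    (u v : ℕ → Fin n → ℂ)
    (hp : 1 ≤ p) (hu0 : u 1 ≠ 0) (hv0 : v 1 ≠ 0)
    (hu1 : Matrix.vecMul (star (u 1)) A = lam0 • star (u 1))
    (huS : ∀ i, 1 ≤ i → i + 1 ≤ p →
      Matrix.vecMul (star (u (i + 1))) A = lam0 • star (u (i + 1)) + star (u i))
    (hv1 : A.mulVec (v 1) = lam0 • v 1)
    (hvS : ∀ j, 1 ≤ j → j + 1 ≤ p →
      A.mulVec (v (j + 1)) = lam0 • v (j + 1) + v j)
    (hlam : (A - lam • (1 : Matrix (Fin n) (Fin n) ℂ)).det ≠ 0) :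
    ∀ i j, 1 ≤ i → 1 ≤ j → i + j ≤ p →
      dotProduct (star (u i))
        ((A - lam • (1 : Matrix (Fin n) (Fin n) ℂ))⁻¹.mulVec (v j)) = 0 := by
  set B : Matrix (Fin n) (Fin n) ℂ := A - lam • 1 with hBdef
  set R : Matrix (Fin n) (Fin n) ℂ := B⁻¹ with hRdef
  have hBunit : IsUnit B.det := isUnit_iff_ne_zero.mpr hlam
  have hBR : B * R = 1 := Matrix.mul_nonsing_inv B hBunit
  have hRB : R * B = 1 := Matrix.nonsing_inv_mul B hBunit
  set μ : ℂ := lam0 - lam with hμdef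
  -- vecMul and mulVec against B
  have hvecB : ∀ w : Fin n → ℂ, Matrix.vecMul w B = Matrix.vecMul w A - lam • w := by
    intro w
    have : w ᵥ* (lam • (1 : Matrix (Fin n) (Fin n) ℂ)) = lam • w := by
      ext k; simp [Matrix.vecMul, dotProduct, Matrix.one_apply, mul_comm]
    rw [hBdef, Matrix.vecMul_sub, this]
  have hmulB : ∀ w : Fin n → ℂ, B.mulVec w = A.mulVec w - lam • w := by
    intro w
    have : (lam • (1 : Matrix (Fin n) (Fin n) ℂ)) *ᵥ w = lam • w := by
      ext k; simp [Matrix.mulVec, dotProduct, Matrix.one_apply]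
    rw [hBdef, Matrix.sub_mulVec, this]
  -- chain relations against B
  have hu1B : Matrix.vecMul (star (u 1)) B = μ • star (u 1) := by
    rw [hvecB, hu1, hμdef, sub_smul]
  have huSB : ∀ i, 1 ≤ i → i + 1 ≤ p →
      Matrix.vecMul (star (u (i + 1))) B = μ • star (u (i + 1)) + star (u i) := by
    intro i h1 h2
    rw [hvecB, huS i h1 h2, hμdef, sub_smul]
    abel
  have hv1B : B.mulVec (v 1) = μ • v 1 := by
    rw [hmulB, hv1, hμdef, sub_smul]
  have hvSB : ∀ j, 1 ≤ j → j + 1 ≤ p →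
      B.mulVec (v (j + 1)) = μ • v (j + 1) + v j := by
    intro j h1 h2
    rw [hmulB, hvS j h1 h2, hμdef, sub_smul]
    abel
  -- resolve through R, generic lemma: w = vecMul (vecMul w B) R
  have hres : ∀ w : Fin n → ℂ, Matrix.vecMul (Matrix.vecMul w B) R = w := by
    intro w
    rw [Matrix.vecMul_vecMul, hBR, Matrix.vecMul_one]
  have hresR : ∀ w : Fin n → ℂ, R.mulVec (B.mulVec w) = w := by
    intro w
    rw [Matrix.mulVec_mulVec, hRB, Matrix.one_mulVec]
  -- μ ≠ 0
  have hμ0 : μ ≠ 0 := by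
    intro h
    apply hu0
    have : star (u 1) = (0 : Fin n → ℂ) := by
      have := hres (star (u 1))
      rw [hu1B, h, zero_smul, Matrix.zero_vecMul] at this
      exact this.symm
    have := congrArg star this
    simpa using this
  -- notation
  set g : ℕ → ℕ → ℂ := fun i j => dotProduct (star (u i)) (R.mulVec (v j)) with hg
  set h : ℕ → ℕ → ℂ := fun i j => dotProduct (star (u i)) (v j) with hh
  -- key identities
  have key1 : ∀ m, h 1 m = μ * g 1 m := by
    intro m
    have h1 : star (u 1) = μ • Matrix.vecMul (star (u 1)) R := by
      rw [← Matrix.smul_vecMul, ← hu1B, hres]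
    calc h 1 m = dotProduct (μ • Matrix.vecMul (star (u 1)) R) (v m) := by
          rw [hh]; dsimp only; rw [← h1]
      _ = μ * dotProduct (Matrix.vecMul (star (u 1)) R) (v m) := by
          rw [smul_dotProduct, smul_eq_mul]
      _ = μ * g 1 m := by rw [hg]; dsimp only; rw [Matrix.dotProduct_mulVec]
  have keyL : ∀ i, 1 ≤ i → i + 1 ≤ p → ∀ m, h (i+1) m = μ * g (i+1) m + g i m := by
    intro i h1 h2 m
    have hres' : star (u (i+1)) = μ • Matrix.vecMul (star (u (i+1))) R
        + Matrix.vecMul (star (u i)) R := by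
      rw [← Matrix.smul_vecMul, ← Matrix.add_vecMul, ← huSB i h1 h2, hres]
    calc h (i+1) m
        = dotProduct (μ • Matrix.vecMul (star (u (i+1))) R
            + Matrix.vecMul (star (u i)) R) (v m) := by
          rw [hh]; dsimp only; rw [← hres']
      _ = μ * dotProduct (Matrix.vecMul (star (u (i+1))) R) (v m)
            + dotProduct (Matrix.vecMul (star (u i)) R) (v m) := by
          rw [add_dotProduct, smul_dotProduct, smul_eq_mul]
      _ = μ * g (i+1) m + g i m := by
          rw [hg]; dsimp only; rw [Matrix.dotProduct_mulVec, Matrix.dotProduct_mulVec]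
  have keyR : ∀ j, 1 ≤ j → j + 1 ≤ p → ∀ m, h m (j+1) = μ * g m (j+1) + g m j := by
    intro j h1 h2 m
    have hres' : v (j+1) = μ • R.mulVec (v (j+1)) + R.mulVec (v j) := by
      rw [← Matrix.mulVec_smul, ← Matrix.mulVec_add, ← hvSB j h1 h2, hresR]
    calc h m (j+1)
        = dotProduct (star (u m)) (μ • R.mulVec (v (j+1)) + R.mulVec (v j)) := by
          rw [hh]; dsimp only; rw [← hres']
      _ = μ * dotProduct (star (u m)) (R.mulVec (v (j+1)))
            + dotProduct (star (u m)) (R.mulVec (v j)) := by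
          rw [dotProduct_add, dotProduct_smul, smul_eq_mul]
      _ = μ * g m (j+1) + g m j := by rw [hg]
  -- cross identity: h (i+1) j = h i (j+1)
  have hcross : ∀ i j, 1 ≤ i → 1 ≤ j → i + 1 ≤ p → j + 1 ≤ p →
      h (i+1) j = h i (j+1) := by
    intro i j h1 h2 h3 h4
    have e1 : dotProduct (star (u (i+1))) (A.mulVec (v (j+1)))
        = lam0 * h (i+1) (j+1) + h i (j+1) := by
      rw [Matrix.dotProduct_mulVec, huS i h1 h3, add_dotProduct,
        smul_dotProduct, smul_eq_mul, hh]
    have e2 : dotProduct (star (u (i+1))) (A.mulVec (v (j+1)))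
        = lam0 * h (i+1) (j+1) + h (i+1) j := by
      rw [hvS j h2 h4, dotProduct_add, dotProduct_smul, smul_eq_mul, hh]
    have := e1.symm.trans e2
    exact (add_left_cancel this).symm
  -- base case: g 1 j = 0 for j + 1 ≤ p
  have base : ∀ j, 1 ≤ j → j + 1 ≤ p → g 1 j = 0 := by
    intro j h1 h2
    have e1 := keyR j h1 h2 1
    have e2 := key1 (j+1)
    linear_combination e2 - e1
  -- main induction on i
  have main : ∀ i j, 1 ≤ i → 1 ≤ j → i + j ≤ p → g i j = 0 := by
    intro i
    induction i with
    | zero => intro j h1; exact absurd h1 (by omega)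
    | succ k ih =>
      intro j h1 h2 h3
      rcases Nat.eq_or_lt_of_le (Nat.one_le_iff_ne_zero.mpr (by omega : k + 1 ≠ 0)) with _ | hk
      · -- k = 0
        have hk0 : k = 0 := by omega
        subst hk0
        exact base j h2 (by omega)
      · -- k ≥ 1
        have hk1 : 1 ≤ k := by omega
        have hkp : k + 1 ≤ p := by omega
        have hjp : j + 1 ≤ p := by omega
        have e1 := keyL k hk1 hkp j
        have e2 := keyR j h2 hjp k
        have e3 := hcross k j hk1 h2 hkp hjp
        have ih1 : g k j = 0 := ih j hk1 h2 (by omega)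
        have ih2 : g k (j+1) = 0 := ih (j+1) hk1 (by omega) (by omega)
        have : μ * g (k+1) j = μ * 0 := by
          linear_combination (-1 : ℂ) * e1 + e3 + e2 + μ * ih2
        exact mul_left_cancel₀ hμ0 this
  intro i j h1 h2 h3
  exact main i j h1 h2 h3
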